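/- Let 𝔤 be a finite-dimensional real Lie algebra with a symmetric, nondegenerate, invariant bilinear form B𝔤 and B𝔤-dual bases e, f : ι → 𝔤, and let ρ : 𝔤 → Module.End ℝ V be a Lie algebra homomorphism (a representation of 𝔤 on a finite-dimensional real vector space V). Then the 4T sum of the families (ρ ∘ e, ρ ∘ f) vanishes. (Proposition 4 / equation (15): the image ρ(C) of the Casimir tensor under a representation of a metrized Lie algebra is a weight tensor, so every such representation defines a framed weight system.) -/

import Mathlib

open scoped TensorProduct Classical

set_option synthInstance.maxHeartbeats 400000
set_option maxHeartbeats 1000000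

attribute [local instance 100] LieRing.ofAssociativeRing

/-- The image of the Casimir tensor under a representation of a metrized Lie algebra
satisfies the 4T relation (Proposition 4 / equation (15)). -/
theorem lie_algebra_weight_tensor_4T
    {𝔤 : Type*} [LieRing 𝔤] [LieAlgebra ℝ 𝔤] [FiniteDimensional ℝ 𝔤]
    {V : Type*} [AddCommGroup V] [Module ℝ V] [FiniteDimensional ℝ V]
    (B : 𝔤 →ₗ[ℝ] 𝔤 →ₗ[ℝ] ℝ)
    (hBsymm : ∀ x y, B x y = B y x)
    (hBnd : ∀ x, (∀ y, B x y = 0) → x = 0)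
    (hBinv : ∀ x y z : 𝔤, B ⁅z, x⁆ y + B x ⁅z, y⁆ = 0)
    {ι : Type*} [Fintype ι]
    (e f : Module.Basis ι ℝ 𝔤)
    (hdual : ∀ i j, B (e i) (f j) = if i = j then 1 else 0)
    (ρ : 𝔤 →ₗ⁅ℝ⁆ Module.End ℝ V) :
    (∑ i, ∑ j, ρ (e i) ⊗ₜ[ℝ] ((ρ (e j) * ρ (f i) - ρ (f i) * ρ (e j)) ⊗ₜ[ℝ] ρ (f j)))
      + (∑ i, ∑ j, ρ (e i) ⊗ₜ[ℝ] (ρ (e j) ⊗ₜ[ℝ] (ρ (f j) * ρ (f i) - ρ (f i) * ρ (f j))))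
      = (0 : Module.End ℝ V ⊗[ℝ] (Module.End ℝ V ⊗[ℝ] Module.End ℝ V)) := by
  classical
  -- expansion in the basis e with coefficients via f
  have hrep_e : ∀ x : 𝔤, x = ∑ k, B x (f k) • e k := by
    intro x
    have hc : ∀ k, B x (f k) = e.repr x k := by
      intro k
      conv_lhs => rw [← e.sum_repr x]
      simp only [map_sum, map_smul, LinearMap.sum_apply, Finset.sum_apply, LinearMap.smul_apply, smul_eq_mul, mul_ite, mul_one, mul_zero, Finset.mem_univ, if_true, hdual, Finset.sum_ite_eq']
    conv_lhs => rw [← e.sum_repr x]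
    refine Finset.sum_congr rfl fun k _ => ?_
    rw [hc k]
  have hrep_f : ∀ x : 𝔤, x = ∑ k, B (e k) x • f k := by
    intro x
    have hc : ∀ k, B (e k) x = f.repr x k := by
      intro k
      conv_lhs => rw [← f.sum_repr x]
      simp only [map_sum, map_smul, LinearMap.sum_apply, Finset.sum_apply, LinearMap.smul_apply, smul_eq_mul, mul_ite, mul_one, mul_zero, Finset.mem_univ, if_true, hdual, Finset.sum_ite_eq]
    conv_lhs => rw [← f.sum_repr x]
    refine Finset.sum_congr rfl fun k _ => ?_
    rw [hc k]
  have hcomm : ∀ x y : 𝔤, ρ x * ρ y - ρ y * ρ x = ρ ⁅x, y⁆ := by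
    intro x y
    rw [LieHom.map_lie, Ring.lie_def]
  -- key cancellation of coefficients via invariance
  have hkey : ∀ i j k, B ⁅e j, f i⁆ (f k) + B (e j) ⁅f k, f i⁆ = 0 := by
    intro i j k
    have h1 := hBinv (f i) (f k) (e j)
    have h2 := hBinv (e j) (f i) (f k)
    have h3 : B ⁅f k, e j⁆ (f i) = - B ⁅e j, f k⁆ (f i) := by
      have : ⁅f k, e j⁆ = -⁅e j, f k⁆ := by rw [← lie_skew]
      rw [this, map_neg]
      rfl
    have h4 : B ⁅e j, f k⁆ (f i) = B (f i) ⁅e j, f k⁆ := hBsymm _ _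
    linarith
  have h1 : ∀ i j, ρ (e i) ⊗ₜ[ℝ] ((ρ (e j) * ρ (f i) - ρ (f i) * ρ (e j)) ⊗ₜ[ℝ] ρ (f j))
      = ∑ k, B ⁅e j, f i⁆ (f k) •
          (ρ (e i) ⊗ₜ[ℝ] (ρ (e k) ⊗ₜ[ℝ] ρ (f j))) := by
    intro i j
    rw [hcomm]
    conv_lhs => rw [hrep_e ⁅e j, f i⁆]
    rw [show (ρ (∑ k, B ⁅e j, f i⁆ (f k) • e k) : Module.End ℝ V)
        = ρ.toLinearMap (∑ k, B ⁅e j, f i⁆ (f k) • e k) from rfl, map_sum]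
    simp only [TensorProduct.sum_tmul, TensorProduct.tmul_sum, map_smul,
      LieHom.coe_toLinearMap, TensorProduct.smul_tmul, TensorProduct.tmul_smul]
  have h2 : ∀ i j, ρ (e i) ⊗ₜ[ℝ] (ρ (e j) ⊗ₜ[ℝ] (ρ (f j) * ρ (f i) - ρ (f i) * ρ (f j)))
      = ∑ k, B (e k) ⁅f j, f i⁆ •
          (ρ (e i) ⊗ₜ[ℝ] (ρ (e j) ⊗ₜ[ℝ] ρ (f k))) := by
    intro i j
    rw [hcomm]
    conv_lhs => rw [hrep_f ⁅f j, f i⁆]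
    rw [show (ρ (∑ k, B (e k) ⁅f j, f i⁆ • f k) : Module.End ℝ V)
        = ρ.toLinearMap (∑ k, B (e k) ⁅f j, f i⁆ • f k) from rfl, map_sum]
    simp only [TensorProduct.sum_tmul, TensorProduct.tmul_sum, map_smul,
      LieHom.coe_toLinearMap, TensorProduct.smul_tmul, TensorProduct.tmul_smul]
  simp only [h1, h2]
  have hswap : ∀ i : ι,
      (∑ j, ∑ k, B (e k) ⁅f j, f i⁆ • (ρ (e i) ⊗ₜ[ℝ] (ρ (e j) ⊗ₜ[ℝ] ρ (f k))))
      = ∑ j, ∑ k, B (e j) ⁅f k, f i⁆ • (ρ (e i) ⊗ₜ[ℝ] (ρ (e k) ⊗ₜ[ℝ] ρ (f j))) := by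
    intro i
    exact Finset.sum_comm
  rw [← Finset.sum_add_distrib]
  refine Finset.sum_eq_zero fun i _ => ?_
  rw [hswap i, ← Finset.sum_add_distrib]
  refine Finset.sum_eq_zero fun j _ => ?_
  rw [← Finset.sum_add_distrib]
  refine Finset.sum_eq_zero fun k _ => ?_
  rw [← add_smul, hkey, zero_smul]
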